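/- Let A be an n×n real matrix with all off-diagonal entries nonnegative, all diagonal entries in [−1,0], and every row summing to zero, and suppose P = I + A is scrambling, i.e., for every pair of rows i, j there is a column s with P_{is}·P_{js} > 0. Suppose ∑_{s=0}^∞ min_i ω_i(s) = ∞ and ∑_{s=0}^∞ max_i ω_i(s)² < ∞. On a probability space let θ(0) ∈ [0,1]^n be deterministic and θ(t+1) = (I + Ω(t)A)·θ(t) + Ω(t)·ε(t), where Ω(t) is the diagonal matrix with entries ω_i(t) ∈ [0,1] and each ε(t) is a random vector with values in [−1,1]^n satisfying E[ε(t) | θ(0), …, θ(t)] = 0. Then C·θ(t) → 0 in L², i.e., E[‖C·θ(t)‖₂²] → 0 as t → ∞, where C = I − (1/n)·e·eᵀ is the centering matrix and e is the all-ones vector. -/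

import Mathlib

open Matrix MeasureTheory Filter Topology Finset

namespace Stmt13
variable {n : ℕ} [NeZero n]


variable {n : ℕ} [NeZero n]

noncomputable def osc (x : Fin n → ℝ) : ℝ :=
  Finset.univ.sup' Finset.univ_nonempty x - Finset.univ.inf' Finset.univ_nonempty x

lemma inf'_le_sup'_self (x : Fin n → ℝ) :
    Finset.univ.inf' Finset.univ_nonempty x ≤ Finset.univ.sup' Finset.univ_nonempty x := by
  obtain ⟨i⟩ := (inferInstance : Nonempty (Fin n))
  exact le_trans (Finset.inf'_le x (Finset.mem_univ i)) (Finset.le_sup' x (Finset.mem_univ i))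

lemma osc_nonneg (x : Fin n → ℝ) : 0 ≤ osc x :=
  sub_nonneg.2 (inf'_le_sup'_self x)

lemma sub_le_osc (x : Fin n → ℝ) (i j : Fin n) : x i - x j ≤ osc x :=
  sub_le_sub (Finset.le_sup' x (Finset.mem_univ i)) (Finset.inf'_le x (Finset.mem_univ j))

lemma abs_sub_le_osc (x : Fin n → ℝ) (i j : Fin n) : |x i - x j| ≤ osc x :=
  abs_sub_le_iff.2 ⟨sub_le_osc x i j, sub_le_osc x j i⟩

lemma osc_le {x : Fin n → ℝ} {a : ℝ} (h : ∀ i j, x i - x j ≤ a) : osc x ≤ a := by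
  obtain ⟨i, -, hi⟩ := Finset.exists_mem_eq_sup' Finset.univ_nonempty x
  obtain ⟨j, -, hj⟩ := Finset.exists_mem_eq_inf' Finset.univ_nonempty x
  rw [osc, hi, hj]; exact h i j

lemma osc_exists_pair (x : Fin n → ℝ) : ∃ i j, osc x = x i - x j := by
  obtain ⟨i, -, hi⟩ := Finset.exists_mem_eq_sup' Finset.univ_nonempty x
  obtain ⟨j, -, hj⟩ := Finset.exists_mem_eq_inf' Finset.univ_nonempty x
  exact ⟨i, j, by rw [osc, hi, hj]⟩

/-- one-step contraction of oscillation under a row-stochastic matrix with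
scrambling overlap at least `c`. -/
lemma osc_mulVec_le {Q : Matrix (Fin n) (Fin n) ℝ}
    (h1 : ∀ i, ∑ j, Q i j = 1) {c : ℝ}
    (hc : ∀ i j, c ≤ ∑ s, min (Q i s) (Q j s)) (y : Fin n → ℝ) :
    osc (Q *ᵥ y) ≤ (1 - c) * osc y := by
  apply osc_le
  intro i j
  set M := Finset.univ.sup' Finset.univ_nonempty y with hM
  set I := Finset.univ.inf' Finset.univ_nonempty y with hI
  set cs : Fin n → ℝ := fun s => min (Q i s) (Q j s) with hcs
  set S : ℝ := ∑ s, cs s with hS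
  have hsplit : ∀ k : Fin n, ∑ s, (Q k s - cs s) * y s = (Q *ᵥ y) k - ∑ s, cs s * y s := by
    intro k
    simp [Matrix.mulVec, dotProduct, sub_mul, Finset.sum_sub_distrib]
  have hsum : ∀ k : Fin n, ∑ s, (Q k s - cs s) = 1 - S := by
    intro k
    rw [Finset.sum_sub_distrib, h1, hS]
  have hA : ∑ s, (Q i s - cs s) * y s ≤ (1 - S) * M := by
    rw [← hsum i, Finset.sum_mul]
    refine Finset.sum_le_sum fun s _ => ?_
    exact mul_le_mul_of_nonneg_left (Finset.le_sup' y (Finset.mem_univ s))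
      (sub_nonneg.2 (min_le_left _ _))
  have hB : (1 - S) * I ≤ ∑ s, (Q j s - cs s) * y s := by
    rw [← hsum j, Finset.sum_mul]
    refine Finset.sum_le_sum fun s _ => ?_
    exact mul_le_mul_of_nonneg_left (Finset.inf'_le y (Finset.mem_univ s))
      (sub_nonneg.2 (min_le_right _ _))
  have hcS : c ≤ S := hc i j
  have hosc : osc y = M - I := rfl
  have h1S : (1 - S) * (M - I) ≤ (1 - c) * (M - I) :=
    mul_le_mul_of_nonneg_right (by linarith) (by rw [← hosc]; exact osc_nonneg y)
  have e1 := hsplit i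
  have e2 := hsplit j
  have : (Q *ᵥ y) i - (Q *ᵥ y) j ≤ (1 - S) * (M - I) := by
    have := sub_le_sub hA hB
    rw [e1, e2] at this
    nlinarith [this]
  calc (Q *ᵥ y) i - (Q *ᵥ y) j ≤ (1 - S) * (M - I) := this
    _ ≤ (1 - c) * (M - I) := h1S
    _ = (1 - c) * osc y := by rw [hosc]


noncomputable def Qm (A : Matrix (Fin n) (Fin n) ℝ) (w : ℕ → Fin n → ℝ) (t : ℕ) :
    Matrix (Fin n) (Fin n) ℝ := 1 + Matrix.diagonal (w t) * A

lemma Qm_apply (A : Matrix (Fin n) (Fin n) ℝ) (w : ℕ → Fin n → ℝ) (t : ℕ) (i j : Fin n) :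
    Qm A w t i j = (if i = j then 1 else 0) + w t i * A i j := by
  simp [Qm, Matrix.add_apply, Matrix.one_apply, Matrix.diagonal_mul]

noncomputable def Phi (A : Matrix (Fin n) (Fin n) ℝ) (w : ℕ → Fin n → ℝ) :
    ℕ → ℕ → Matrix (Fin n) (Fin n) ℝ
  | 0, _ => 1
  | (t+1), s => if t + 1 ≤ s then 1 else Qm A w t * Phi A w t s

lemma Phi_self (A : Matrix (Fin n) (Fin n) ℝ) (w : ℕ → Fin n → ℝ) (s : ℕ) :
    Phi A w s s = 1 := by
  cases s with
  | zero => rfl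
  | succ t => simp [Phi]

lemma Phi_succ (A : Matrix (Fin n) (Fin n) ℝ) (w : ℕ → Fin n → ℝ) {s t : ℕ} (h : s ≤ t) :
    Phi A w (t+1) s = Qm A w t * Phi A w t s := by
  have : ¬ (t + 1 ≤ s) := by omega
  simp [Phi, this]

variable {n : ℕ} [NeZero n]

noncomputable def gamma (A : Matrix (Fin n) (Fin n) ℝ) : ℝ :=
  Finset.univ.inf' Finset.univ_nonempty
    (fun p : Fin n × Fin n => ∑ s, min ((1 + A) p.1 s) ((1 + A) p.2 s))

section
variable {A : Matrix (Fin n) (Fin n) ℝ} {w : ℕ → Fin n → ℝ}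
  (hoff : ∀ i j, i ≠ j → 0 ≤ A i j)
  (hdiag : ∀ i, A i i ∈ Set.Icc (-1 : ℝ) 0)
  (hrowsum : ∀ i, ∑ j, A i j = 0)
  (hw : ∀ t i, w t i ∈ Set.Icc (0 : ℝ) 1)

lemma P_apply (i j : Fin n) : (1 + A) i j = (if i = j then 1 else 0) + A i j := by
  simp [Matrix.add_apply, Matrix.one_apply]

include hoff hdiag in
lemma P_nonneg (i j : Fin n) : 0 ≤ (1 + A) i j := by
  rw [P_apply]
  by_cases h : i = j
  · subst h; have := hdiag i; simp; linarith [this.1]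
  · simpa [h] using hoff i j h

include hrowsum in
lemma P_rowsum (i : Fin n) : ∑ j, (1 + A) i j = 1 := by
  have hp : ∀ j, (1 + A) i j = (if i = j then (1:ℝ) else 0) + A i j := P_apply i
  simp only [hp]
  rw [Finset.sum_add_distrib, hrowsum i, Finset.sum_ite_eq]
  simp

include hoff hdiag hw in
lemma Qm_nonneg (t : ℕ) (i j : Fin n) : 0 ≤ Qm A w t i j := by
  rw [Qm_apply]
  by_cases h : i = j
  · subst h
    have h1 := (hdiag i).1; have h2 := (hdiag i).2
    have h3 := (hw t i).1; have h4 := (hw t i).2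
    have he : (if i = i then (1:ℝ) else 0) = 1 := if_pos rfl
    rw [he]
    nlinarith
  · have := hoff i j h; have h3 := (hw t i).1
    simp only [if_neg h]
    positivity

include hrowsum in
lemma Qm_rowsum (t : ℕ) (i : Fin n) : ∑ j, Qm A w t i j = 1 := by
  simp [Qm_apply, Finset.sum_add_distrib, ← Finset.mul_sum, hrowsum i]

include hoff hdiag in
lemma gamma_pos (hscr : ∀ i j : Fin n, ∃ s : Fin n, 0 < (1 + A) i s * (1 + A) j s) :
    0 < gamma A := by
  rw [gamma, Finset.lt_inf'_iff]
  rintro ⟨i, j⟩ -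
  obtain ⟨s, hs⟩ := hscr i j
  have h1 : 0 < (1 + A) i s := by
    rcases lt_or_ge 0 ((1 + A) i s) with h | h
    · exact h
    · exfalso; nlinarith [P_nonneg hoff hdiag j s, P_nonneg hoff hdiag i s]
  have h2 : 0 < (1 + A) j s := by nlinarith
  refine Finset.sum_pos' (fun k _ => le_min (P_nonneg hoff hdiag i k) (P_nonneg hoff hdiag j k)) ?_
  exact ⟨s, Finset.mem_univ s, lt_min h1 h2⟩

include hoff hdiag hrowsum in
lemma gamma_le_one : gamma A ≤ 1 := by
  obtain ⟨i⟩ := (inferInstance : Nonempty (Fin n))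
  have h1 : gamma A ≤ ∑ s, min ((1 + A) i s) ((1 + A) i s) :=
    Finset.inf'_le _ (Finset.mem_univ (i, i))
  have h2 : ∑ s, min ((1 + A) i s) ((1 + A) i s) = 1 := by
    simp only [min_self]; exact P_rowsum hrowsum i
  linarith

include hoff hdiag hw in
lemma overlap (t : ℕ) (i j : Fin n) :
    gamma A * (⨅ k, w t k) ≤ ∑ s, min (Qm A w t i s) (Qm A w t j s) := by
  set m : ℝ := ⨅ k, w t k with hm
  have hm0 : 0 ≤ m := le_ciInf fun k => (hw t k).1
  have hmle : ∀ k, m ≤ w t k := fun k => ciInf_le (Finite.bddBelow_range _) k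
  have hQgeP : ∀ (k : Fin n) (s : Fin n), w t k * (1 + A) k s ≤ Qm A w t k s := by
    intro k s
    rw [Qm_apply, P_apply, mul_add]
    have h4 := (hw t k).2
    have h3 := (hw t k).1
    by_cases h : k = s
    · subst h
      have he : (if k = k then (1:ℝ) else 0) = 1 := if_pos rfl
      rw [he]
      nlinarith
    · simp only [if_neg h]; nlinarith
  have key : ∀ s, m * min ((1 + A) i s) ((1 + A) j s) ≤ min (Qm A w t i s) (Qm A w t j s) := by
    intro s
    refine le_min ?_ ?_
    · calc m * min ((1 + A) i s) ((1 + A) j s) ≤ w t i * (1 + A) i s := by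
            apply mul_le_mul (hmle i) (min_le_left _ _)
              (le_min (P_nonneg hoff hdiag i s) (P_nonneg hoff hdiag j s)) (hw t i).1
        _ ≤ Qm A w t i s := hQgeP i s
    · calc m * min ((1 + A) i s) ((1 + A) j s) ≤ w t j * (1 + A) j s := by
            apply mul_le_mul (hmle j) (min_le_right _ _)
              (le_min (P_nonneg hoff hdiag i s) (P_nonneg hoff hdiag j s)) (hw t j).1
        _ ≤ Qm A w t j s := hQgeP j s
  calc gamma A * m ≤ (∑ s, min ((1 + A) i s) ((1 + A) j s)) * m := by
        apply mul_le_mul_of_nonneg_right (Finset.inf'_le _ (Finset.mem_univ (i, j))) hm0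
    _ = ∑ s, m * min ((1 + A) i s) ((1 + A) j s) := by rw [Finset.sum_mul]; congr 1; ext s; ring
    _ ≤ ∑ s, min (Qm A w t i s) (Qm A w t j s) := Finset.sum_le_sum fun s _ => key s

end

section
variable {A : Matrix (Fin n) (Fin n) ℝ} {w : ℕ → Fin n → ℝ}
  (hoff : ∀ i j, i ≠ j → 0 ≤ A i j)
  (hdiag : ∀ i, A i i ∈ Set.Icc (-1 : ℝ) 0)
  (hrowsum : ∀ i, ∑ j, A i j = 0)
  (hw : ∀ t i, w t i ∈ Set.Icc (0 : ℝ) 1)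
  (hscr : ∀ i j : Fin n, ∃ s : Fin n, 0 < (1 + A) i s * (1 + A) j s)

/-- the contraction coefficients -/
noncomputable def Bc (A : Matrix (Fin n) (Fin n) ℝ) (w : ℕ → Fin n → ℝ) (t s : ℕ) : ℝ :=
  ∏ r ∈ Finset.Ico s t, (1 - gamma A * ⨅ i, w r i)

include hoff hdiag hrowsum hw hscr in
lemma factor_mem (r : ℕ) : (1 - gamma A * ⨅ i, w r i) ∈ Set.Icc (0:ℝ) 1 := by
  have hγ0 : 0 < gamma A := gamma_pos hoff hdiag hscr
  have hγ1 : gamma A ≤ 1 := gamma_le_one hoff hdiag hrowsum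
  have hm0 : (0:ℝ) ≤ ⨅ i, w r i := le_ciInf fun k => (hw r k).1
  have hm1 : (⨅ i, w r i) ≤ 1 := by
    obtain ⟨k⟩ := (inferInstance : Nonempty (Fin n))
    exact le_trans (ciInf_le (Finite.bddBelow_range _) k) (hw r k).2
  constructor
  · nlinarith
  · nlinarith

include hoff hdiag hrowsum hw hscr in
lemma Bc_mem (t s : ℕ) : Bc A w t s ∈ Set.Icc (0:ℝ) 1 := by
  constructor
  · exact Finset.prod_nonneg fun r _ => (factor_mem hoff hdiag hrowsum hw hscr r).1
  · exact Finset.prod_le_one (fun r _ => (factor_mem hoff hdiag hrowsum hw hscr r).1)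
      (fun r _ => (factor_mem hoff hdiag hrowsum hw hscr r).2)

include hoff hdiag hrowsum hw hscr in
lemma osc_Phi_le {s t : ℕ} (h : s ≤ t) (y : Fin n → ℝ) :
    osc (Phi A w t s *ᵥ y) ≤ Bc A w t s * osc y := by
  induction t, h using Nat.le_induction with
  | base =>
    rw [Phi_self, Bc, Finset.Ico_self, Finset.prod_empty, one_mul, Matrix.one_mulVec]
  | succ t ht IH =>
    rw [Phi_succ A w ht, ← Matrix.mulVec_mulVec]
    have step := osc_mulVec_le (Qm_rowsum hrowsum t)
      (c := gamma A * ⨅ i, w t i) (overlap hoff hdiag hw t) (Phi A w t s *ᵥ y)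
    have hf := factor_mem hoff hdiag hrowsum hw hscr t
    calc osc (Qm A w t *ᵥ (Phi A w t s *ᵥ y))
        ≤ (1 - gamma A * ⨅ i, w t i) * osc (Phi A w t s *ᵥ y) := step
      _ ≤ (1 - gamma A * ⨅ i, w t i) * (Bc A w t s * osc y) :=
          mul_le_mul_of_nonneg_left IH hf.1
      _ = Bc A w (t+1) s * osc y := by
          rw [Bc, Bc, Finset.prod_Ico_succ_top ht]
          ring

include hoff hdiag hrowsum hw hscr in
lemma Bc_tendsto (hdiv : Tendsto (fun T => ∑ r ∈ Finset.range T, ⨅ i, w r i) atTop atTop)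
    (s : ℕ) : Tendsto (fun t => Bc A w t s) atTop (𝓝 0) := by
  have hγ0 : 0 < gamma A := gamma_pos hoff hdiag hscr
  set S : ℕ → ℝ := fun T => ∑ r ∈ Finset.range T, ⨅ i, w r i with hSdef
  have hub : ∀ t, s ≤ t → Bc A w t s ≤ Real.exp (-(gamma A * (S t - S s))) := by
    intro t ht
    have h1 : Bc A w t s ≤ ∏ r ∈ Finset.Ico s t, Real.exp (-(gamma A * ⨅ i, w r i)) := by
      refine Finset.prod_le_prod (fun r _ => (factor_mem hoff hdiag hrowsum hw hscr r).1)
        (fun r _ => ?_)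
      have := Real.add_one_le_exp (-(gamma A * ⨅ i, w r i))
      linarith
    have hsub : S t - S s = ∑ r ∈ Finset.Ico s t, ⨅ i, w r i := by
      rw [hSdef]
      exact (Finset.sum_Ico_eq_sub _ ht).symm
    have h2 : ∑ r ∈ Finset.Ico s t, -(gamma A * ⨅ i, w r i) = -(gamma A * (S t - S s)) := by
      rw [hsub, Finset.mul_sum, Finset.sum_neg_distrib]
    calc Bc A w t s ≤ ∏ r ∈ Finset.Ico s t, Real.exp (-(gamma A * ⨅ i, w r i)) := h1
      _ = Real.exp (∑ r ∈ Finset.Ico s t, -(gamma A * ⨅ i, w r i)) := (Real.exp_sum _ _).symm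
      _ = Real.exp (-(gamma A * (S t - S s))) := by rw [h2]
  have hS : Tendsto (fun t => gamma A * (S t - S s)) atTop atTop := by
    apply Tendsto.const_mul_atTop hγ0
    simpa [sub_eq_add_neg] using tendsto_atTop_add_const_right atTop (-S s) hdiv
  have hexp : Tendsto (fun t => Real.exp (-(gamma A * (S t - S s)))) atTop (𝓝 0) :=
    Real.tendsto_exp_atBot.comp (tendsto_neg_atTop_atBot.comp hS)
  refine squeeze_zero' (Filter.Eventually.of_forall fun t =>
    (Bc_mem hoff hdiag hrowsum hw hscr t s).1) ?_ hexp
  filter_upwards [eventually_ge_atTop s] with t ht using hub t ht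

lemma Cmat_mulVec_apply (y : Fin n → ℝ) (i : Fin n) :
    (((1 : Matrix (Fin n) (Fin n) ℝ) - (n : ℝ)⁻¹ • Matrix.of fun _ _ => (1 : ℝ)) *ᵥ y) i
      = y i - (n : ℝ)⁻¹ * ∑ j, y j := by
  rw [Matrix.sub_mulVec, Matrix.one_mulVec]
  simp [Matrix.smul_mulVec, Matrix.mulVec, dotProduct, Finset.mul_sum]

lemma Cbound (y : Fin n → ℝ) :
    ∑ i, ((((1 : Matrix (Fin n) (Fin n) ℝ) - (n : ℝ)⁻¹ • Matrix.of fun _ _ => (1 : ℝ)) *ᵥ y) i) ^ 2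
      ≤ n * osc y ^ 2 := by
  have hn : 0 < (n : ℝ) := by exact_mod_cast Nat.pos_of_ne_zero (NeZero.ne n)
  have habs : ∀ i, |y i - (n : ℝ)⁻¹ * ∑ j, y j| ≤ osc y := by
    intro i
    have hrw : y i - (n : ℝ)⁻¹ * ∑ j, y j = (n : ℝ)⁻¹ * ∑ j, (y i - y j) := by
      rw [Finset.sum_sub_distrib, Finset.sum_const, Finset.card_univ, Fintype.card_fin,
        nsmul_eq_mul, mul_sub]
      field_simp
    rw [hrw, abs_mul, abs_of_nonneg (by positivity : (0:ℝ) ≤ (n:ℝ)⁻¹)]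
    calc (n:ℝ)⁻¹ * |∑ j, (y i - y j)| ≤ (n:ℝ)⁻¹ * ∑ j, |y i - y j| :=
        mul_le_mul_of_nonneg_left (Finset.abs_sum_le_sum_abs _ _) (by positivity)
      _ ≤ (n:ℝ)⁻¹ * ∑ _j : Fin n, osc y :=
        mul_le_mul_of_nonneg_left (Finset.sum_le_sum fun j _ => abs_sub_le_osc y i j)
          (by positivity)
      _ = osc y := by
        rw [Finset.sum_const, Finset.card_univ, Fintype.card_fin, nsmul_eq_mul]
        field_simp
  calc ∑ i, ((((1 : Matrix (Fin n) (Fin n) ℝ) - (n : ℝ)⁻¹ • Matrix.of fun _ _ => (1 : ℝ)) *ᵥ y) i) ^ 2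
      ≤ ∑ _i : Fin n, osc y ^ 2 := by
        refine Finset.sum_le_sum fun i _ => ?_
        rw [Cmat_mulVec_apply]
        have h := abs_le.1 (habs i)
        exact sq_le_sq' (by linarith [h.1]) h.2
    _ = n * osc y ^ 2 := by
        rw [Finset.sum_const, Finset.card_univ, Fintype.card_fin, nsmul_eq_mul]

end
end Stmt13

open Stmt13 in
/-- For a scrambling chain `P = I + A` with no stubborn agents, divergence of
`∑ₜ minᵢ ωᵢ(t)` and convergence of `∑ₜ maxᵢ ωᵢ(t)²`, the centered opinions `C θ(t)` tend to
zero in `L²`, where `C = I - (1/n) e eᵀ`. -/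
theorem centered_opinions_tendsto_zero_L2
    (n : ℕ) (hn : 0 < n)
    (A : Matrix (Fin n) (Fin n) ℝ)
    (hoff : ∀ i j, i ≠ j → 0 ≤ A i j)
    (hdiag : ∀ i, A i i ∈ Set.Icc (-1 : ℝ) 0)
    (hrowsum : ∀ i, ∑ j, A i j = 0)
    (hscramble : ∀ i j : Fin n, ∃ s : Fin n,
      0 < (1 + A : Matrix (Fin n) (Fin n) ℝ) i s * (1 + A : Matrix (Fin n) (Fin n) ℝ) j s)
    (w : ℕ → Fin n → ℝ) (hw : ∀ t i, w t i ∈ Set.Icc (0 : ℝ) 1)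
    (hdiv : Tendsto (fun T => ∑ s ∈ Finset.range T, ⨅ i, w s i) atTop atTop)
    (hsq : Summable fun s => ⨆ i, (w s i) ^ 2)
    {Ωs : Type*} [MeasurableSpace Ωs] (μ : Measure Ωs) [IsProbabilityMeasure μ]
    (θ0 : Fin n → ℝ) (hθ0 : ∀ i, θ0 i ∈ Set.Icc (0 : ℝ) 1)
    (θ ε : ℕ → Ωs → Fin n → ℝ)
    (hθinit : ∀ x, θ 0 x = θ0)
    (hεmeas : ∀ t, Measurable (ε t))
    (hεrange : ∀ t x i, ε t x i ∈ Set.Icc (-1 : ℝ) 1)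
    (hrec : ∀ t x, θ (t + 1) x =
      (1 + Matrix.diagonal (w t) * A) *ᵥ θ t x + Matrix.diagonal (w t) *ᵥ ε t x)
    (hcond : ∀ t i, μ[(fun x => ε t x i) |
        ⨆ s ∈ Finset.range (t + 1), MeasurableSpace.comap (θ s) inferInstance] =ᵐ[μ] 0) :
    Tendsto (fun t => ∫ x, ∑ i,
        ((((1 : Matrix (Fin n) (Fin n) ℝ) - (n : ℝ)⁻¹ • Matrix.of fun _ _ => (1 : ℝ)) *ᵥ θ t x) i) ^ 2 ∂μ)
      atTop (𝓝 0) := by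
  classical
  haveI : NeZero n := ⟨hn.ne'⟩
  set C : Matrix (Fin n) (Fin n) ℝ :=
    (1 : Matrix (Fin n) (Fin n) ℝ) - (n : ℝ)⁻¹ • Matrix.of fun _ _ => (1 : ℝ) with hCdef
  let F : ℕ → MeasurableSpace Ωs := fun t =>
    ⨆ s ∈ Finset.range (t + 1), MeasurableSpace.comap (θ s) inferInstance
  have hcond' : ∀ t i, μ[(fun x => ε t x i)|F t] =ᵐ[μ] 0 := hcond
  set η : ℕ → Ωs → Fin n → ℝ := fun s x => Matrix.diagonal (w s) *ᵥ ε s x with hηdef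
  have hrecQ : ∀ t x, θ (t + 1) x = Qm A w t *ᵥ θ t x + η t x := hrec
  have hηk : ∀ s x k, η s x k = w s k * ε s x k := fun s x k =>
    Matrix.mulVec_diagonal _ _ _
  have hηbd : ∀ s x k, |η s x k| ≤ w s k := by
    intro s x k
    rw [hηk, abs_mul, abs_of_nonneg (hw s k).1]
    have h1 := (hεrange s x k).1
    have h2 := (hεrange s x k).2
    have h3 : |ε s x k| ≤ 1 := abs_le.2 ⟨h1, h2⟩
    nlinarith [(hw s k).1, abs_nonneg (ε s x k)]
  have hηbd1 : ∀ s x k, |η s x k| ≤ 1 := fun s x k => (hηbd s x k).trans (hw s k).2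
  have hθm : ∀ t, Measurable (θ t) := by
    intro t
    induction t with
    | zero =>
      have : θ 0 = fun _ => θ0 := funext hθinit
      rw [this]; exact measurable_const
    | succ t IH =>
      have hrw : θ (t + 1) = fun x i =>
          (∑ j, Qm A w t i j * θ t x j) + w t i * ε t x i := by
        funext x i
        rw [hrecQ t x]
        simp [Matrix.mulVec, dotProduct, hηk]
      rw [hrw]
      refine measurable_pi_iff.2 fun i => Measurable.add ?_ ?_
      · exact Finset.measurable_sum _ fun j _ => ((measurable_pi_apply j).comp IH).const_mul _
      · exact ((measurable_pi_apply i).comp (hεmeas t)).const_mul _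
  have hηm : ∀ s k, Measurable fun x => η s x k := by
    intro s k
    simp only [hηk]
    exact ((measurable_pi_apply k).comp (hεmeas s)).const_mul _
  have hInt : ∀ (f : Ωs → ℝ) (K : ℝ), Measurable f → (∀ x, |f x| ≤ K) → Integrable f μ := by
    intro f K hm hb
    exact ⟨hm.aestronglyMeasurable,
      HasFiniteIntegral.of_bounded (C := K) (Eventually.of_forall fun x => by
        simpa [Real.norm_eq_abs] using hb x)⟩
  have hFle : ∀ t, F t ≤ ‹MeasurableSpace Ωs› := by
    intro t
    exact iSup₂_le fun s _ => measurable_iff_comap_le.1 (hθm s)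
  have hθFm : ∀ r t : ℕ, r ≤ t → Measurable[F t] (θ r) := by
    intro r t hrt
    have h1 : Measurable[MeasurableSpace.comap (θ r) inferInstance] (θ r) :=
      measurable_iff_comap_le.2 le_rfl
    exact h1.mono (le_iSup₂ (f := fun s (_ : s ∈ Finset.range (t + 1)) =>
      MeasurableSpace.comap (θ s) inferInstance) r (Finset.mem_range.2 (by omega))) le_rfl
  have key1 : ∀ (s : ℕ) (k : Fin n), ∫ x, η s x k ∂μ = 0 := by
    intro s k
    have h1 : ∫ x, (μ[(fun x => ε s x k)|F s]) x ∂μ = ∫ x, ε s x k ∂μ :=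
      integral_condExp (hFle s)
    have h2 : ∫ x, (μ[(fun x => ε s x k)|F s]) x ∂μ = 0 := by
      rw [integral_congr_ae (hcond' s k)]; simp
    have hε0 : ∫ x, ε s x k ∂μ = 0 := by rw [← h1, h2]
    simp only [hηk]
    rw [MeasureTheory.integral_const_mul, hε0, mul_zero]
  have key2lt : ∀ (s s' : ℕ), s < s' → ∀ (k l : Fin n),
      ∫ x, η s x k * η s' x l ∂μ = 0 := by
    intro s s' hss k l
    set f : Ωs → ℝ := fun x => η s x k with hfdef
    set g : Ωs → ℝ := fun x => ε s' x l with hgdef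
    have hfm' : Measurable[F s'] f := by
      have hfeq : f = fun x => θ (s + 1) x k - ∑ j, Qm A w s k j * θ s x j := by
        funext x
        have h := congrFun (hrecQ s x) k
        simp only [Pi.add_apply] at h
        have hMv : (Qm A w s *ᵥ θ s x) k = ∑ j, Qm A w s k j * θ s x j := by
          simp [Matrix.mulVec, dotProduct]
        rw [hfdef]
        simp only
        linarith [h, hMv.symm ▸ h]
      rw [hfeq]
      have h1 : Measurable[F s'] fun x => θ (s + 1) x k :=
        (measurable_pi_apply k).comp (hθFm (s + 1) s' (by omega))
      have h2 : ∀ j, Measurable[F s'] fun x => θ s x j := fun j =>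
        (measurable_pi_apply j).comp (hθFm s s' (by omega))
      exact h1.sub (Finset.measurable_sum _ fun j _ => (h2 j).const_mul _)
    have hfm : Measurable f := hfm'.mono (hFle s') le_rfl
    have hgm : Measurable g := (measurable_pi_apply l).comp (hεmeas s')
    have hgb : ∀ x, |g x| ≤ 1 := fun x => abs_le.2 ⟨(hεrange s' x l).1, (hεrange s' x l).2⟩
    have hgi : Integrable g μ := hInt _ 1 hgm hgb
    have hfb : ∀ x, |f x| ≤ 1 := fun x => hηbd1 s x k
    have hfgi : Integrable (f * g) μ := by
      refine hInt _ 1 (hfm.mul hgm) fun x => ?_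
      rw [Pi.mul_apply, abs_mul]
      nlinarith [hfb x, hgb x, abs_nonneg (f x), abs_nonneg (g x)]
    have hpull : μ[f * g|F s'] =ᵐ[μ] f * μ[g|F s'] :=
      condExp_mul_of_stronglyMeasurable_left hfm'.stronglyMeasurable hfgi hgi
    have hzero : (f * μ[g|F s']) =ᵐ[μ] 0 := by
      filter_upwards [hcond' s' l] with x hx
      simp only [Pi.mul_apply, Pi.zero_apply]
      rw [show (μ[g|F s']) x = 0 from hx, mul_zero]
    have hfg0 : ∫ x, f x * g x ∂μ = 0 := by
      have e1 : ∫ x, (f * g) x ∂μ = ∫ x, (μ[f * g|F s']) x ∂μ :=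
        (integral_condExp (hFle s')).symm
      have e2 : ∫ x, (μ[f * g|F s']) x ∂μ = 0 := by
        rw [integral_congr_ae (hpull.trans hzero)]; simp
      simpa [Pi.mul_apply] using e1.trans e2
    calc ∫ x, η s x k * η s' x l ∂μ = ∫ x, w s' l * (f x * g x) ∂μ := by
          congr 1
          funext x
          rw [hηk s' x l]
          ring
      _ = w s' l * ∫ x, f x * g x ∂μ := MeasureTheory.integral_const_mul _ _
      _ = 0 := by rw [hfg0, mul_zero]
  have key2 : ∀ (s s' : ℕ), s ≠ s' → ∀ (k l : Fin n),
      ∫ x, η s x k * η s' x l ∂μ = 0 := by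
    intro s s' hne k l
    rcases lt_or_gt_of_ne hne with h | h
    · exact key2lt s s' h k l
    · have h0 := key2lt s' s h l k
      calc ∫ x, η s x k * η s' x l ∂μ = ∫ x, η s' x l * η s x k ∂μ := by
            congr 1; funext x; ring
        _ = 0 := h0
  -- representation of θ as deterministic part plus martingale increments
  have hmulVec_sum : ∀ (M : Matrix (Fin n) (Fin n) ℝ) (T : Finset ℕ) (v : ℕ → Fin n → ℝ),
      M *ᵥ (∑ s ∈ T, v s) = ∑ s ∈ T, M *ᵥ v s := by
    intro M T v
    funext i
    simp only [Matrix.mulVec, dotProduct, Finset.sum_apply, Finset.mul_sum]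
    exact Finset.sum_comm
  have hrep : ∀ t x, θ t x
      = Phi A w t 0 *ᵥ θ0 + ∑ s ∈ Finset.range t, Phi A w t (s + 1) *ᵥ η s x := by
    intro t
    induction t with
    | zero =>
      intro x
      rw [hθinit x, Phi_self A w 0, Matrix.one_mulVec]
      simp
    | succ t IH =>
      intro x
      rw [hrecQ t x, IH x, Matrix.mulVec_add, hmulVec_sum, Finset.sum_range_succ,
        Phi_self A w (t + 1), Matrix.one_mulVec]
      simp only [Matrix.mulVec_mulVec]
      rw [← Phi_succ A w (Nat.zero_le t)]
      have hc : ∀ s ∈ Finset.range t,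
          (Qm A w t * Phi A w t (s + 1)) *ᵥ η s x = Phi A w (t + 1) (s + 1) *ᵥ η s x := by
        intro s hs
        have hs' := Finset.mem_range.1 hs
        rw [← Phi_succ A w (by omega : s + 1 ≤ t)]
      rw [Finset.sum_congr rfl hc, add_assoc]
  -- helpers for linear images of the noise
  have hdot : ∀ (M : Matrix (Fin n) (Fin n) ℝ) (v : Fin n → ℝ) (i : Fin n),
      (M *ᵥ v) i = ∑ k, M i k * v k := by
    intro M v i; simp [Matrix.mulVec, dotProduct]
  have hMVm : ∀ (M : Matrix (Fin n) (Fin n) ℝ) (s : ℕ) (i : Fin n),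
      Measurable fun x => (M *ᵥ η s x) i := by
    intro M s i
    simp only [hdot]
    exact Finset.measurable_sum _ fun k _ => (hηm s k).const_mul _
  have hMVb : ∀ (M : Matrix (Fin n) (Fin n) ℝ) (s : ℕ) (i : Fin n) (x : Ωs),
      |(M *ᵥ η s x) i| ≤ ∑ k, |M i k| := by
    intro M s i x
    rw [hdot]
    calc |∑ k, M i k * η s x k| ≤ ∑ k, |M i k * η s x k| := Finset.abs_sum_le_sum_abs _ _
      _ ≤ ∑ k, |M i k| := Finset.sum_le_sum fun k _ => by
          rw [abs_mul]
          nlinarith [hηbd1 s x k, abs_nonneg (M i k), abs_nonneg (η s x k)]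
  have hηint : ∀ (s : ℕ) (k : Fin n) (c : ℝ), Integrable (fun x => c * η s x k) μ :=
    fun s k c => (hInt _ 1 (hηm s k) fun x => hηbd1 s x k).const_mul c
  have hηηint : ∀ (s s' : ℕ) (k l : Fin n) (c : ℝ),
      Integrable (fun x => c * (η s x k * η s' x l)) μ := by
    intro s s' k l c
    refine ((hInt _ 1 ((hηm s k).mul (hηm s' l)) fun x => ?_).const_mul c)
    rw [Pi.mul_apply, abs_mul]
    nlinarith [hηbd1 s x k, hηbd1 s' x l, abs_nonneg (η s x k), abs_nonneg (η s' x l)]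
  have hMV0 : ∀ (M : Matrix (Fin n) (Fin n) ℝ) (s : ℕ) (i : Fin n),
      ∫ x, (M *ᵥ η s x) i ∂μ = 0 := by
    intro M s i
    simp only [hdot]
    rw [integral_finset_sum _ fun k _ => hηint s k (M i k)]
    refine Finset.sum_eq_zero fun k _ => ?_
    rw [MeasureTheory.integral_const_mul, key1 s k, mul_zero]
  have hMVorth : ∀ (M M' : Matrix (Fin n) (Fin n) ℝ) (s s' : ℕ) (i : Fin n), s ≠ s' →
      ∫ x, (M *ᵥ η s x) i * (M' *ᵥ η s' x) i ∂μ = 0 := by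
    intro M M' s s' i hne
    simp only [hdot]
    have hptw : ∀ x, (∑ k, M i k * η s x k) * (∑ l, M' i l * η s' x l)
        = ∑ k, ∑ l, (M i k * M' i l) * (η s x k * η s' x l) := by
      intro x
      rw [Finset.sum_mul_sum]
      refine Finset.sum_congr rfl fun k _ => Finset.sum_congr rfl fun l _ => by ring
    rw [integral_congr_ae (Eventually.of_forall hptw),
      integral_finset_sum _ fun k _ =>
        integrable_finset_sum _ fun l _ => hηηint s s' k l _]
    refine Finset.sum_eq_zero fun k _ => ?_
    rw [integral_finset_sum _ fun l _ => hηηint s s' k l _]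
    refine Finset.sum_eq_zero fun l _ => ?_
    rw [MeasureTheory.integral_const_mul, key2 s s' hne k l, mul_zero]
  -- generic orthogonal expansion
  have expand : ∀ (t : ℕ) (a : ℝ) (g : ℕ → Ωs → ℝ),
      (∀ s, Measurable (g s)) → (∀ s, ∃ K, ∀ x, |g s x| ≤ K) →
      (∀ s, ∫ x, g s x ∂μ = 0) →
      (∀ s s', s ≠ s' → ∫ x, g s x * g s' x ∂μ = 0) →
      ∫ x, (a + ∑ s ∈ Finset.range t, g s x) ^ 2 ∂μ
        = a ^ 2 + ∑ s ∈ Finset.range t, ∫ x, (g s x) ^ 2 ∂μ := by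
    intro t a g hgm hgb hg0 hgo
    have hgint : ∀ s, Integrable (g s) μ := fun s => by
      obtain ⟨K, hK⟩ := hgb s; exact hInt _ K (hgm s) hK
    have hgint2 : ∀ s s', Integrable (fun x => g s x * g s' x) μ := by
      intro s s'
      obtain ⟨K, hK⟩ := hgb s
      obtain ⟨K', hK'⟩ := hgb s'
      refine hInt _ (K * K') ((hgm s).mul (hgm s')) fun x => ?_
      rw [abs_mul]
      exact mul_le_mul (hK x) (hK' x) (abs_nonneg _) ((abs_nonneg _).trans (hK x))
    have hsum_int : Integrable (fun x => ∑ s ∈ Finset.range t, g s x) μ :=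
      integrable_finset_sum _ fun s _ => hgint s
    have hdbl_int : Integrable
        (fun x => ∑ s ∈ Finset.range t, ∑ s' ∈ Finset.range t, g s x * g s' x) μ :=
      integrable_finset_sum _ fun s _ => integrable_finset_sum _ fun s' _ => hgint2 s s'
    have hptw : ∀ x, (a + ∑ s ∈ Finset.range t, g s x) ^ 2
        = (a ^ 2 + (2 * a) * (∑ s ∈ Finset.range t, g s x))
          + ∑ s ∈ Finset.range t, ∑ s' ∈ Finset.range t, g s x * g s' x := by
      intro x
      rw [← Finset.sum_mul_sum]
      ring
    have hS0 : ∫ x, ∑ s ∈ Finset.range t, g s x ∂μ = 0 := by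
      rw [integral_finset_sum _ fun s _ => hgint s]
      exact Finset.sum_eq_zero fun s _ => hg0 s
    have hD : ∫ x, ∑ s ∈ Finset.range t, ∑ s' ∈ Finset.range t, g s x * g s' x ∂μ
        = ∑ s ∈ Finset.range t, ∫ x, (g s x) ^ 2 ∂μ := by
      rw [integral_finset_sum _ fun s _ => integrable_finset_sum _ fun s' _ => hgint2 s s']
      refine Finset.sum_congr rfl fun s hs => ?_
      rw [integral_finset_sum _ fun s' _ => hgint2 s s']
      rw [Finset.sum_eq_single_of_mem s hs fun s' _ hne => hgo s s' (Ne.symm hne)]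
      congr 1
      funext x
      ring
    calc ∫ x, (a + ∑ s ∈ Finset.range t, g s x) ^ 2 ∂μ
        = ∫ x, ((a ^ 2 + (2 * a) * (∑ s ∈ Finset.range t, g s x))
            + ∑ s ∈ Finset.range t, ∑ s' ∈ Finset.range t, g s x * g s' x) ∂μ :=
          integral_congr_ae (Eventually.of_forall hptw)
      _ = (∫ x, (a ^ 2 + (2 * a) * (∑ s ∈ Finset.range t, g s x)) ∂μ)
            + ∫ x, ∑ s ∈ Finset.range t, ∑ s' ∈ Finset.range t, g s x * g s' x ∂μ :=
          integral_add ((integrable_const _).add (hsum_int.const_mul _)) hdbl_int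
      _ = a ^ 2 + ∑ s ∈ Finset.range t, ∫ x, (g s x) ^ 2 ∂μ := by
          rw [integral_add (integrable_const _) (hsum_int.const_mul _),
            MeasureTheory.integral_const_mul, hS0, hD, integral_const]
          simp
  -- decomposition of the second moment
  have hVt : ∀ t, ∫ x, ∑ i, ((C *ᵥ θ t x) i) ^ 2 ∂μ
      = (∑ i, ((C *ᵥ (Phi A w t 0 *ᵥ θ0)) i) ^ 2)
        + ∑ s ∈ Finset.range t, ∫ x, ∑ i, ((C *ᵥ (Phi A w t (s + 1) *ᵥ η s x)) i) ^ 2 ∂μ := by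
    intro t
    have hfold : ∀ (s : ℕ) (x : Ωs), C *ᵥ (Phi A w t (s + 1) *ᵥ η s x)
        = (C * Phi A w t (s + 1)) *ᵥ η s x := fun s x => Matrix.mulVec_mulVec _ _ _
    have hGm : ∀ (s : ℕ) (i : Fin n),
        Measurable fun x => (C *ᵥ (Phi A w t (s + 1) *ᵥ η s x)) i := by
      intro s i
      simp only [hfold]
      exact hMVm _ s i
    have hGb : ∀ (s : ℕ) (i : Fin n) (x : Ωs),
        |(C *ᵥ (Phi A w t (s + 1) *ᵥ η s x)) i| ≤ ∑ k, |(C * Phi A w t (s + 1)) i k| := by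
      intro s i x
      rw [hfold]
      exact hMVb _ s i x
    have hG0 : ∀ (s : ℕ) (i : Fin n),
        ∫ x, (C *ᵥ (Phi A w t (s + 1) *ᵥ η s x)) i ∂μ = 0 := by
      intro s i
      simp only [hfold]
      exact hMV0 _ s i
    have hGorth : ∀ (s s' : ℕ) (i : Fin n), s ≠ s' →
        ∫ x, (C *ᵥ (Phi A w t (s + 1) *ᵥ η s x)) i
          * (C *ᵥ (Phi A w t (s' + 1) *ᵥ η s' x)) i ∂μ = 0 := by
      intro s s' i hne
      simp only [hfold]
      exact hMVorth _ _ s s' i hne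
    have hCrw : ∀ x, ∑ i, ((C *ᵥ θ t x) i) ^ 2
        = ∑ i, (((C *ᵥ (Phi A w t 0 *ᵥ θ0)) i)
            + ∑ s ∈ Finset.range t, (C *ᵥ (Phi A w t (s + 1) *ᵥ η s x)) i) ^ 2 := by
      intro x
      have h1 : C *ᵥ θ t x = C *ᵥ (Phi A w t 0 *ᵥ θ0)
          + ∑ s ∈ Finset.range t, C *ᵥ (Phi A w t (s + 1) *ᵥ η s x) := by
        rw [hrep t x, Matrix.mulVec_add, hmulVec_sum]
      rw [h1]
      refine Finset.sum_congr rfl fun i _ => ?_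
      congr 1
      simp [Finset.sum_apply]
    have hIi : ∀ i, Integrable (fun x => (((C *ᵥ (Phi A w t 0 *ᵥ θ0)) i)
        + ∑ s ∈ Finset.range t, (C *ᵥ (Phi A w t (s + 1) *ᵥ η s x)) i) ^ 2) μ := by
      intro i
      set K : ℝ := |(C *ᵥ (Phi A w t 0 *ᵥ θ0)) i|
        + ∑ s ∈ Finset.range t, ∑ k, |(C * Phi A w t (s + 1)) i k| with hKdef
      refine hInt _ (K ^ 2) ?_ ?_
      · exact ((measurable_const.add
          (Finset.measurable_sum _ fun s _ => hGm s i)).pow_const 2)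
      · intro x
        have habs : |((C *ᵥ (Phi A w t 0 *ᵥ θ0)) i)
            + ∑ s ∈ Finset.range t, (C *ᵥ (Phi A w t (s + 1) *ᵥ η s x)) i| ≤ K := by
          calc |((C *ᵥ (Phi A w t 0 *ᵥ θ0)) i)
              + ∑ s ∈ Finset.range t, (C *ᵥ (Phi A w t (s + 1) *ᵥ η s x)) i|
              ≤ |(C *ᵥ (Phi A w t 0 *ᵥ θ0)) i|
                + |∑ s ∈ Finset.range t, (C *ᵥ (Phi A w t (s + 1) *ᵥ η s x)) i| := abs_add_le _ _
            _ ≤ K := by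
                rw [hKdef]
                have := (Finset.abs_sum_le_sum_abs
                  (fun s => (C *ᵥ (Phi A w t (s + 1) *ᵥ η s x)) i) (Finset.range t)).trans
                  (Finset.sum_le_sum fun s _ => hGb s i x)
                linarith
        rw [abs_of_nonneg (sq_nonneg _), ← sq_abs]
        have hK0 : 0 ≤ K := (abs_nonneg _).trans habs
        exact pow_le_pow_left₀ (abs_nonneg _) habs 2
    have hGsqint : ∀ (s : ℕ) (i : Fin n),
        Integrable (fun x => ((C *ᵥ (Phi A w t (s + 1) *ᵥ η s x)) i) ^ 2) μ := by
      intro s i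
      refine hInt _ ((∑ k, |(C * Phi A w t (s + 1)) i k|) ^ 2) ((hGm s i).pow_const 2) fun x => ?_
      rw [abs_of_nonneg (sq_nonneg _), ← sq_abs]
      exact pow_le_pow_left₀ (abs_nonneg _) (hGb s i x) 2
    calc ∫ x, ∑ i, ((C *ᵥ θ t x) i) ^ 2 ∂μ
        = ∫ x, ∑ i, (((C *ᵥ (Phi A w t 0 *ᵥ θ0)) i)
            + ∑ s ∈ Finset.range t, (C *ᵥ (Phi A w t (s + 1) *ᵥ η s x)) i) ^ 2 ∂μ :=
          integral_congr_ae (Eventually.of_forall hCrw)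
      _ = ∑ i, ∫ x, (((C *ᵥ (Phi A w t 0 *ᵥ θ0)) i)
            + ∑ s ∈ Finset.range t, (C *ᵥ (Phi A w t (s + 1) *ᵥ η s x)) i) ^ 2 ∂μ :=
          integral_finset_sum _ fun i _ => hIi i
      _ = ∑ i, (((C *ᵥ (Phi A w t 0 *ᵥ θ0)) i) ^ 2
            + ∑ s ∈ Finset.range t, ∫ x, ((C *ᵥ (Phi A w t (s + 1) *ᵥ η s x)) i) ^ 2 ∂μ) := by
          refine Finset.sum_congr rfl fun i _ => ?_
          exact expand t ((C *ᵥ (Phi A w t 0 *ᵥ θ0)) i)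
            (fun s x => (C *ᵥ (Phi A w t (s + 1) *ᵥ η s x)) i)
            (fun s => hGm s i) (fun s => ⟨_, hGb s i⟩) (fun s => hG0 s i)
            (fun s s' h => hGorth s s' i h)
      _ = (∑ i, ((C *ᵥ (Phi A w t 0 *ᵥ θ0)) i) ^ 2)
            + ∑ s ∈ Finset.range t, ∫ x, ∑ i, ((C *ᵥ (Phi A w t (s + 1) *ᵥ η s x)) i) ^ 2 ∂μ := by
          rw [Finset.sum_add_distrib]
          congr 1
          rw [Finset.sum_comm]
          refine Finset.sum_congr rfl fun s _ => ?_
          exact (integral_finset_sum _ fun i _ => hGsqint s i).symm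
  -- bound the two pieces
  set Msq : ℕ → ℝ := fun s => ⨆ i, (w s i) ^ 2 with hMsqdef
  have hsq' : Summable Msq := hsq
  have hMsqle : ∀ s k, (w s k) ^ 2 ≤ Msq s := fun s k =>
    le_ciSup (f := fun i => (w s i) ^ 2) (Set.Finite.bddAbove (Set.finite_range _)) k
  have hMsq0 : ∀ s, 0 ≤ Msq s := fun s => by
    obtain ⟨k⟩ := (inferInstance : Nonempty (Fin n))
    exact (sq_nonneg (w s k)).trans (hMsqle s k)
  have hCb : ∀ y : Fin n → ℝ, ∑ i, ((C *ᵥ y) i) ^ 2 ≤ n * osc y ^ 2 := by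
    intro y
    rw [hCdef]
    exact Cbound y
  have hoscη : ∀ s x, osc (η s x) ^ 2 ≤ 4 * Msq s := by
    intro s x
    obtain ⟨k, l, hkl⟩ := osc_exists_pair (η s x)
    have h1 : osc (η s x) ≤ w s k + w s l := by
      rw [hkl]
      have hk := abs_le.1 (hηbd s x k)
      have hl := abs_le.1 (hηbd s x l)
      linarith [hk.2, hl.1]
    have h0 := osc_nonneg (η s x)
    have h2 : osc (η s x) ^ 2 ≤ (w s k + w s l) ^ 2 := pow_le_pow_left₀ h0 h1 2
    nlinarith [hMsqle s k, hMsqle s l, sq_nonneg (w s k - w s l)]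
  have hosc0 : osc θ0 ≤ 1 := osc_le fun i j => by linarith [(hθ0 i).2, (hθ0 j).1]
  have hbnd : ∀ t, ∫ x, ∑ i, ((C *ᵥ θ t x) i) ^ 2 ∂μ
      ≤ n * Bc A w t 0 ^ 2
        + ∑ s ∈ Finset.range t, (4 * n) * (Bc A w t (s + 1) ^ 2 * Msq s) := by
    intro t
    rw [hVt t]
    have hpart1 : ∑ i, ((C *ᵥ (Phi A w t 0 *ᵥ θ0)) i) ^ 2 ≤ n * Bc A w t 0 ^ 2 := by
      have h1 := hCb (Phi A w t 0 *ᵥ θ0)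
      have h2 : osc (Phi A w t 0 *ᵥ θ0) ≤ Bc A w t 0 * osc θ0 :=
        osc_Phi_le hoff hdiag hrowsum hw hscramble (Nat.zero_le t) θ0
      have hB := Bc_mem hoff hdiag hrowsum hw hscramble t 0
      have h3 : osc (Phi A w t 0 *ᵥ θ0) ^ 2 ≤ (Bc A w t 0 * osc θ0) ^ 2 :=
        pow_le_pow_left₀ (osc_nonneg _) h2 2
      have hn0 : (0:ℝ) ≤ n := Nat.cast_nonneg n
      have hoscθ := osc_nonneg θ0
      have ho2 : osc θ0 ^ 2 ≤ 1 := by nlinarith [hosc0, hoscθ]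
      have h4 : (Bc A w t 0 * osc θ0) ^ 2 ≤ Bc A w t 0 ^ 2 := by
        rw [mul_pow]
        calc Bc A w t 0 ^ 2 * osc θ0 ^ 2 ≤ Bc A w t 0 ^ 2 * 1 :=
              mul_le_mul_of_nonneg_left ho2 (sq_nonneg _)
          _ = Bc A w t 0 ^ 2 := mul_one _
      have h5 := mul_le_mul_of_nonneg_left (h3.trans h4) hn0
      linarith
    have hpart2 : ∀ s ∈ Finset.range t,
        ∫ x, ∑ i, ((C *ᵥ (Phi A w t (s + 1) *ᵥ η s x)) i) ^ 2 ∂μ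
          ≤ (4 * n) * (Bc A w t (s + 1) ^ 2 * Msq s) := by
      intro s hs
      have hst := Finset.mem_range.1 hs
      have hpt : ∀ x, ∑ i, ((C *ᵥ (Phi A w t (s + 1) *ᵥ η s x)) i) ^ 2
          ≤ (4 * n) * (Bc A w t (s + 1) ^ 2 * Msq s) := by
        intro x
        have h1 := hCb (Phi A w t (s + 1) *ᵥ η s x)
        have h2 : osc (Phi A w t (s + 1) *ᵥ η s x) ≤ Bc A w t (s + 1) * osc (η s x) :=
          osc_Phi_le hoff hdiag hrowsum hw hscramble (by omega) (η s x)
        have h3 : osc (Phi A w t (s + 1) *ᵥ η s x) ^ 2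
            ≤ Bc A w t (s + 1) ^ 2 * osc (η s x) ^ 2 := by
          have := pow_le_pow_left₀ (osc_nonneg _) h2 2
          rwa [mul_pow] at this
        have h4 : Bc A w t (s + 1) ^ 2 * osc (η s x) ^ 2
            ≤ Bc A w t (s + 1) ^ 2 * (4 * Msq s) :=
          mul_le_mul_of_nonneg_left (hoscη s x) (sq_nonneg _)
        have hn0 : (0:ℝ) ≤ n := Nat.cast_nonneg n
        calc ∑ i, ((C *ᵥ (Phi A w t (s + 1) *ᵥ η s x)) i) ^ 2
            ≤ n * osc (Phi A w t (s + 1) *ᵥ η s x) ^ 2 := h1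
          _ ≤ n * (Bc A w t (s + 1) ^ 2 * (4 * Msq s)) :=
              mul_le_mul_of_nonneg_left (h3.trans h4) hn0
          _ = (4 * n) * (Bc A w t (s + 1) ^ 2 * Msq s) := by ring
      have hfold : ∀ (x : Ωs), C *ᵥ (Phi A w t (s + 1) *ᵥ η s x)
          = (C * Phi A w t (s + 1)) *ᵥ η s x := fun x => Matrix.mulVec_mulVec _ _ _
      have hintg : Integrable (fun x => ∑ i, ((C *ᵥ (Phi A w t (s + 1) *ᵥ η s x)) i) ^ 2) μ := by
        refine integrable_finset_sum _ fun i _ => ?_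
        refine hInt _ ((∑ k, |(C * Phi A w t (s + 1)) i k|) ^ 2) ?_ fun x => ?_
        · refine Measurable.pow_const ?_ 2
          simp only [hfold]
          exact hMVm _ s i
        · rw [abs_of_nonneg (sq_nonneg _), ← sq_abs]
          refine pow_le_pow_left₀ (abs_nonneg _) ?_ 2
          rw [hfold]
          exact hMVb _ s i x
      calc ∫ x, ∑ i, ((C *ᵥ (Phi A w t (s + 1) *ᵥ η s x)) i) ^ 2 ∂μ
          ≤ ∫ _x, (4 * (n:ℝ)) * (Bc A w t (s + 1) ^ 2 * Msq s) ∂μ :=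
            integral_mono hintg (integrable_const _) hpt
        _ = (4 * n) * (Bc A w t (s + 1) ^ 2 * Msq s) := by simp
    exact add_le_add hpart1 (Finset.sum_le_sum hpart2)
  have hnonneg : ∀ t, 0 ≤ ∫ x, ∑ i, ((C *ᵥ θ t x) i) ^ 2 ∂μ := fun t =>
    integral_nonneg fun x => Finset.sum_nonneg fun i _ => sq_nonneg _
  -- limits of the bounds
  have hBtend := Bc_tendsto hoff hdiag hrowsum hw hscramble hdiv
  have hB0 : Tendsto (fun t => (n:ℝ) * Bc A w t 0 ^ 2) atTop (𝓝 0) := by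
    have h2 : Tendsto (fun t => Bc A w t 0 ^ 2) atTop (𝓝 0) := by
      simpa using (hBtend 0).pow 2
    simpa using h2.const_mul (n:ℝ)
  set g : ℕ → ℕ → ℝ := fun t s => if s < t then Bc A w t (s + 1) ^ 2 * Msq s else 0 with hgdef
  have hgsum : ∀ t, ∑' s, g t s = ∑ s ∈ Finset.range t, Bc A w t (s + 1) ^ 2 * Msq s := by
    intro t
    rw [tsum_eq_sum (s := Finset.range t) (fun s hs => by
      simp only [hgdef]
      rw [if_neg (by simpa using fun h => hs (Finset.mem_range.2 h))])]
    refine Finset.sum_congr rfl fun s hs => ?_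
    simp only [hgdef]
    rw [if_pos (Finset.mem_range.1 hs)]
  have hgtend : Tendsto (fun t => ∑' s, g t s) atTop (𝓝 0) := by
    have := tendsto_tsum_of_dominated_convergence (𝓕 := atTop) (f := g) (g := fun _ => (0:ℝ))
      (bound := Msq) hsq' ?_ ?_
    · simpa using this
    · intro s
      have h1 : Tendsto (fun t => Bc A w t (s + 1) ^ 2 * Msq s) atTop (𝓝 0) := by
        simpa using ((hBtend (s + 1)).pow 2).mul_const (Msq s)
      refine h1.congr' ?_
      filter_upwards [eventually_gt_atTop s] with t ht
      simp only [hgdef]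
      rw [if_pos ht]
    · refine Eventually.of_forall fun t s => ?_
      simp only [hgdef]
      by_cases h : s < t
      · rw [if_pos h]
        have hB := Bc_mem hoff hdiag hrowsum hw hscramble t (s + 1)
        rw [Real.norm_eq_abs, abs_of_nonneg (mul_nonneg (sq_nonneg _) (hMsq0 s))]
        have hB2 : Bc A w t (s + 1) ^ 2 ≤ 1 := by nlinarith [hB.1, hB.2]
        nlinarith [mul_nonneg (sub_nonneg.2 hB2) (hMsq0 s)]
      · rw [if_neg h]
        simpa using hMsq0 s
  have hsum0 : Tendsto (fun t => ∑ s ∈ Finset.range t,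
      (4 * (n:ℝ)) * (Bc A w t (s + 1) ^ 2 * Msq s)) atTop (𝓝 0) := by
    have h1 : Tendsto (fun t => (4 * (n:ℝ)) * ∑' s, g t s) atTop (𝓝 0) := by
      simpa using hgtend.const_mul (4 * (n:ℝ))
    refine h1.congr fun t => ?_
    rw [hgsum t, Finset.mul_sum]
  have hBnd0 : Tendsto (fun t => n * Bc A w t 0 ^ 2
      + ∑ s ∈ Finset.range t, (4 * (n:ℝ)) * (Bc A w t (s + 1) ^ 2 * Msq s)) atTop (𝓝 0) := by
    simpa using hB0.add hsum0
  exact squeeze_zero hnonneg hbnd hBnd0
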